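/- Let H be a finite connected simple graph and let s(H) = |E(H)| − |V(H)| + α(H). Then: s(H) = 0 if and only if H is a single vertex or a single edge; s(H) = 1 if and only if H is a triangle or a path on 3 or 4 vertices; and s(H) = 2 if and only if H is a cycle of length four or five, or a triangle with a pendant path on one or two further vertices attached at one of its vertices, or a tree with α(H) = 3. -/

import Mathlib

open SimpleGraph

/-- The degree of a vertex, as the cardinality of its neighbor set. -/
noncomputable def deg {V : Type} (G : SimpleGraph V) (v : V) : ℕ :=
  Nat.card (G.neighborSet v)

/-- The number of edges of a graph. -/
noncomputable def numEdges {V : Type} (G : SimpleGraph V) : ℕ :=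
  Nat.card G.edgeSet

/-- The independence number of a graph. -/
noncomputable def indepNum {V : Type} (G : SimpleGraph V) : ℕ :=
  sSup {n | ∃ s : Set V, (∀ u ∈ s, ∀ v ∈ s, ¬ G.Adj u v) ∧ s.ncard = n}

/-- The set of vertices of degree at most three. -/
noncomputable def D3set {V : Type} (G : SimpleGraph V) : Set V :=
  {v | deg G v ≤ 3}

/-- `D3(G)`: the subgraph induced by the vertices of degree at most three. -/
noncomputable def D3 {V : Type} (G : SimpleGraph V) : SimpleGraph (D3set G) :=
  G.induce (D3set G)

/-- The potential of a graph: `p(G) = 4.8 |V(G)| - 3 |E(G)| + 0.6 α(D3(G))`. -/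
noncomputable def potential {V : Type} (G : SimpleGraph V) : ℚ :=
  (24/5 : ℚ) * Nat.card V - 3 * numEdges G + (3/5 : ℚ) * _root_.indepNum (D3 G)

/-- The potential of a subset `R` of the vertices of `G`:
`p(R) = 4.8 |R| - 3 |E(G[R])| + 0.6 α(G[D3(G) ∩ R])`. -/
noncomputable def potentialOf {V : Type} (G : SimpleGraph V) (R : Set V) : ℚ :=
  (24/5 : ℚ) * R.ncard - 3 * numEdges (G.induce R)
    + (3/5 : ℚ) * _root_.indepNum (G.induce (D3set G ∩ R))

/-- A graph is `k`-critical if it is not `(k-1)`-colorable but every proper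
subgraph is `(k-1)`-colorable. -/
def IsKCritical {V : Type} (G : SimpleGraph V) (k : ℕ) : Prop :=
  ¬ G.Colorable (k - 1) ∧ ∀ H : SimpleGraph V, H ≤ G → H ≠ G → H.Colorable (k - 1)

/-- A graph has Ore-degree at most `d` if `d(u) + d(v) ≤ d` for every edge `uv`. -/
def OreDegreeAtMost {V : Type} (G : SimpleGraph V) (d : ℕ) : Prop :=
  ∀ u v, G.Adj u v → deg G u + deg G v ≤ d

/-- The Ore-composition of `G1` (edge-side, with replaced edge `xy`) and `G2`
(split-side, with split vertex `z` whose incident edges going to `A` are attached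
to `x` and the remaining ones to `y`). -/
def oreCompose {V1 V2 : Type} (G1 : SimpleGraph V1) (G2 : SimpleGraph V2)
    (x y : V1) (z : V2) (A : Set V2) :
    SimpleGraph (V1 ⊕ {v : V2 // v ≠ z}) :=
  SimpleGraph.fromRel (fun a b =>
    match a, b with
    | Sum.inl u, Sum.inl v =>
        G1.Adj u v ∧ ¬((u = x ∧ v = y) ∨ (u = y ∧ v = x))
    | Sum.inl u, Sum.inr v =>
        (u = x ∧ G2.Adj z v.1 ∧ v.1 ∈ A) ∨ (u = y ∧ G2.Adj z v.1 ∧ v.1 ∉ A)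
    | Sum.inr _, Sum.inl _ => False
    | Sum.inr u, Sum.inr v => G2.Adj u.1 v.1)

/-- `G` is an Ore-composition of `G1` and `G2`: there are a replaced edge `xy` of
`G1`, a split vertex `z` of `G2`, and a splitting of the edges at `z` into two
nonempty parts, such that `G` is isomorphic to the resulting composition. -/
def IsOreComposition {V V1 V2 : Type} (G : SimpleGraph V)
    (G1 : SimpleGraph V1) (G2 : SimpleGraph V2) : Prop :=
  ∃ (x y : V1) (z : V2) (A : Set V2),
    G1.Adj x y ∧ (∃ p, G2.Adj z p ∧ p ∈ A) ∧ (∃ q, G2.Adj z q ∧ q ∉ A) ∧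
    Nonempty (G ≃g oreCompose G1 G2 x y z A)

/-- The family of `4`-Ore graphs: the smallest family of graphs containing `K4`
and closed under Ore-compositions. -/
inductive IsFourOre : ∀ {V : Type}, SimpleGraph V → Prop
  | k4 {V : Type} (G : SimpleGraph V) :
      Nonempty (G ≃g completeGraph (Fin 4)) → IsFourOre G
  | comp {V V1 V2 : Type} (G : SimpleGraph V)
      (G1 : SimpleGraph V1) (G2 : SimpleGraph V2) :
      IsFourOre G1 → IsFourOre G2 → IsOreComposition G G1 G2 → IsFourOre G

/-- The boundary of a set `R`: the vertices of `R` with a neighbor outside `R`. -/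
def boundary {V : Type} (G : SimpleGraph V) (R : Set V) : Set V :=
  {v | v ∈ R ∧ ∃ u, u ∉ R ∧ G.Adj v u}

/-- A proper subset `R` of the vertices with `|R| ≥ 2` is collapsible if in every
proper 3-coloring of `G[R]` all vertices of the boundary of `R` get the same color. -/
def Collapsible {V : Type} (G : SimpleGraph V) (R : Set V) : Prop :=
  R ≠ Set.univ ∧ 2 ≤ R.ncard ∧
  ∀ φ : V → Fin 3, (∀ u ∈ R, ∀ v ∈ R, G.Adj u v → φ u ≠ φ v) →
    ∀ u ∈ boundary G R, ∀ v ∈ boundary G R, φ u = φ v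

/-- The critical complement of a set `R`: identify the boundary of `R` to a single
vertex (the vertex `none`) and delete the rest of `R`. -/
def criticalComplement {V : Type} (G : SimpleGraph V) (R : Set V) :
    SimpleGraph (Option {v : V // v ∉ R}) :=
  SimpleGraph.fromRel (fun a b =>
    match a, b with
    | some u, some v => G.Adj u.1 v.1
    | some u, none => ∃ w ∈ boundary G R, G.Adj u.1 w
    | none, some _ => False
    | none, none => False)

/-- A nonempty proper subset `R` with boundary `S` is cocollapsible if every vertex
of `S` has exactly one neighbor outside `R`, and for every non-constant list of
forbidden colors on `S` there is a proper 3-coloring of `G[R]` avoiding them. -/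
def Cocollapsible {V : Type} (G : SimpleGraph V) (R : Set V) : Prop :=
  R.Nonempty ∧ R ≠ Set.univ ∧
  (∀ v ∈ boundary G R, ∃! u, u ∉ R ∧ G.Adj v u) ∧
  ∀ f : V → Fin 3,
    (∃ u ∈ boundary G R, ∃ v ∈ boundary G R, f u ≠ f v) →
    ∃ φ : V → Fin 3, (∀ u ∈ R, ∀ v ∈ R, G.Adj u v → φ u ≠ φ v) ∧
      ∀ v ∈ boundary G R, φ v ≠ f v

/-- A cocollapsible set is nontrivial if its complement has more than one vertex. -/
def NontrivialCocollapsible {V : Type} (G : SimpleGraph V) (R : Set V) : Prop :=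
  Cocollapsible G R ∧ 1 < (Rᶜ : Set V).ncard

/-- The graph `H` together with the (possibly new) edge `uv`. -/
def withEdge {W : Type} (H : SimpleGraph W) (u v : W) : SimpleGraph W :=
  H ⊔ SimpleGraph.fromEdgeSet {s(u, v)}

/-- A collapsible set `R` is tight if for any two distinct boundary vertices `u, v`
the graph `G[R] + uv` is `4`-critical. -/
def TightCollapsible {V : Type} (G : SimpleGraph V) (R : Set V) : Prop :=
  Collapsible G R ∧
  ∀ u (hu : u ∈ boundary G R) v (hv : v ∈ boundary G R), u ≠ v →
    IsKCritical (withEdge (G.induce R) ⟨u, hu.1⟩ ⟨v, hv.1⟩) 4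

/-- `s(H) = |E(H)| - |V(H)| + α(H)`. -/
noncomputable def sVal {V : Type} (H : SimpleGraph V) : ℤ :=
  (numEdges H : ℤ) - (Nat.card V : ℤ) + (_root_.indepNum H : ℤ)

/-- `H7`: the unique Ore-composition of two copies of `K4`. Vertices `0,1,2,3`
form the edge-side `K4` with replaced edge `01`; the split vertex of the second
`K4` on `{z,4,5,6}` is split so that `0` gets the edge to `4` and `1` gets the
edges to `5` and `6`. -/
def H7 : SimpleGraph (Fin 7) :=
  SimpleGraph.fromRel (fun a b =>
    ((a, b) : Fin 7 × Fin 7) ∈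
      ([(0, 2), (0, 3), (1, 2), (1, 3), (2, 3), (4, 5), (4, 6), (5, 6),
        (0, 4), (1, 5), (1, 6)] : List (Fin 7 × Fin 7)))

/-- A diamond in `G`: a subgraph isomorphic to `K4` minus an edge whose two
vertices of degree three within the subgraph (`w1` and `w2`) also have degree
three in `G`.  The vertices `e1` and `e2` are the ends of the diamond. -/
def IsDiamond {V : Type} (G : SimpleGraph V) (e1 e2 w1 w2 : V) : Prop :=
  e1 ≠ e2 ∧ e1 ≠ w1 ∧ e1 ≠ w2 ∧ e2 ≠ w1 ∧ e2 ≠ w2 ∧ w1 ≠ w2 ∧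
  G.Adj w1 w2 ∧ G.Adj e1 w1 ∧ G.Adj e1 w2 ∧ G.Adj e2 w1 ∧ G.Adj e2 w2 ∧
  deg G w1 = 3 ∧ deg G w2 = 3

/-- A triangle with a pendant edge. -/
def trianglePendant1 : SimpleGraph (Fin 4) :=
  SimpleGraph.fromRel (fun a b =>
    ((a, b) : Fin 4 × Fin 4) ∈ ([(0, 1), (1, 2), (2, 0), (0, 3)] : List (Fin 4 × Fin 4)))

/-- A triangle with a pendant path on two further vertices. -/
def trianglePendant2 : SimpleGraph (Fin 5) :=
  SimpleGraph.fromRel (fun a b =>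
    ((a, b) : Fin 5 × Fin 5) ∈
      ([(0, 1), (1, 2), (2, 0), (0, 3), (3, 4)] : List (Fin 5 × Fin 5)))
set_option linter.unusedSectionVars false

instance {W : Type} [DecidableEq W] {r : W → W → Prop} [DecidableRel r] :
    DecidableRel (SimpleGraph.fromRel r).Adj := fun a b =>
  inferInstanceAs (Decidable (a ≠ b ∧ (r a b ∨ r b a)))

instance {n : ℕ} : DecidableRel (completeGraph (Fin n)).Adj := fun a b =>
  inferInstanceAs (Decidable (a ≠ b))

instance {n : ℕ} : DecidableRel (pathGraph n).Adj := fun _ _ =>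
  decidable_of_iff _ pathGraph_adj.symm

section IndepNum
variable {V : Type} [Fintype V] {H : SimpleGraph V}

lemma indep_set_bdd : BddAbove {n | ∃ s : Set V, (∀ u ∈ s, ∀ v ∈ s, ¬ H.Adj u v) ∧ s.ncard = n} := by
  refine ⟨Fintype.card V, ?_⟩
  rintro n ⟨s, -, rfl⟩
  exact le_trans (Set.ncard_le_ncard (Set.subset_univ s) Set.finite_univ) (by
    simp [Set.ncard_univ, Nat.card_eq_fintype_card])

lemma le_indepNum {s : Set V} (hs : ∀ u ∈ s, ∀ v ∈ s, ¬ H.Adj u v) :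
    s.ncard ≤ _root_.indepNum H :=
  le_csSup indep_set_bdd ⟨s, hs, rfl⟩

lemma indepNum_le {k : ℕ} (h : ∀ s : Set V, (∀ u ∈ s, ∀ v ∈ s, ¬ H.Adj u v) → s.ncard ≤ k) :
    _root_.indepNum H ≤ k := by
  refine csSup_le ⟨0, ∅, by simp⟩ ?_
  rintro n ⟨s, hs, rfl⟩
  exact h s hs

lemma exists_indep_set : ∃ s : Set V, (∀ u ∈ s, ∀ v ∈ s, ¬ H.Adj u v) ∧ s.ncard = _root_.indepNum H := by
  have h0 : (0 : ℕ) ∈ {n | ∃ s : Set V, (∀ u ∈ s, ∀ v ∈ s, ¬ H.Adj u v) ∧ s.ncard = n} :=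
    ⟨∅, by simp, by simp⟩
  exact Nat.sSup_mem ⟨0, h0⟩ indep_set_bdd

lemma indepNum_le_card : _root_.indepNum H ≤ Fintype.card V :=
  indepNum_le fun s _ => le_trans (Set.ncard_le_ncard (Set.subset_univ s) Set.finite_univ)
    (by simp [Set.ncard_univ, Nat.card_eq_fintype_card])

lemma one_le_indepNum [Nonempty V] : 1 ≤ _root_.indepNum H := by
  obtain ⟨v⟩ := ‹Nonempty V›
  have := le_indepNum (H := H) (s := {v}) (by rintro u rfl w rfl; exact H.irrefl)
  simpa using this

lemma pair_le_indepNum {a b : V} (hne : a ≠ b) (hnadj : ¬ H.Adj a b) : 2 ≤ _root_.indepNum H := by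
  have := le_indepNum (H := H) (s := {a, b}) ?_
  · rwa [Set.ncard_pair hne] at this
  · rintro u hu v hv h
    rcases hu with rfl | rfl <;> rcases hv with rfl | rfl <;>
      first | exact H.irrefl h | exact hnadj h | exact hnadj h.symm

lemma triple_le_indepNum {a b c : V} (hab : a ≠ b) (hac : a ≠ c) (hbc : b ≠ c)
    (h1 : ¬ H.Adj a b) (h2 : ¬ H.Adj a c) (h3 : ¬ H.Adj b c) : 3 ≤ _root_.indepNum H := by
  have := le_indepNum (H := H) (s := {a, b, c}) ?_
  · rw [Set.ncard_eq_three.2 ⟨a, b, c, hab, hac, hbc, rfl⟩] at this; exact this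
  · rintro u hu v hv h
    rcases hu with rfl | rfl | rfl <;> rcases hv with rfl | rfl | rfl <;>
      first
      | exact H.irrefl h
      | exact h1 h
      | exact h1 h.symm
      | exact h2 h
      | exact h2 h.symm
      | exact h3 h
      | exact h3 h.symm

lemma indepNum_le_one (h : ∀ a b : V, ¬ H.Adj a b → a = b) : _root_.indepNum H ≤ 1 := by
  refine indepNum_le fun s hs => ?_
  by_contra hc
  push_neg at hc
  obtain ⟨a, b, ha, hb, hne⟩ := (Set.one_lt_ncard_iff (Set.toFinite s)).1 (by omega)
  exact hne (h a b (hs a ha b hb))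

lemma indepNum_le_two
    (h : ∀ a b c : V, ¬ H.Adj a b → ¬ H.Adj a c → ¬ H.Adj b c → a = b ∨ a = c ∨ b = c) :
    _root_.indepNum H ≤ 2 := by
  refine indepNum_le fun s hs => ?_
  by_contra hc
  push_neg at hc
  obtain ⟨t, hts, ht⟩ := Set.exists_subset_card_eq (n := 3) (s := s) (by omega)
  obtain ⟨a, b, c, hab, hac, hbc, rfl⟩ := Set.ncard_eq_three.1 ht
  have ha := hts (show a ∈ ({a,b,c} : Set V) by simp)
  have hb := hts (show b ∈ ({a,b,c} : Set V) by simp)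
  have hc' := hts (show c ∈ ({a,b,c} : Set V) by simp)
  rcases h a b c (hs a ha b hb) (hs a ha c hc') (hs b hb c hc') with rfl | rfl | rfl <;>
    simp_all

lemma exists_nonadj_of_two_le (h : 2 ≤ _root_.indepNum H) :
    ∃ a b : V, a ≠ b ∧ ¬ H.Adj a b := by
  obtain ⟨s, hs, hcard⟩ := exists_indep_set (H := H)
  obtain ⟨a, b, ha, hb, hne⟩ := (Set.one_lt_ncard_iff (Set.toFinite s)).1 (by omega)
  exact ⟨a, b, hne, hs a ha b hb⟩

end IndepNum

section IsoInv
variable {V W : Type} {G : SimpleGraph V} {G' : SimpleGraph W}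

lemma numEdges_iso (e : G ≃g G') : numEdges G = numEdges G' :=
  Nat.card_congr e.mapEdgeSet

lemma indepNum_iso (e : G ≃g G') : _root_.indepNum G = _root_.indepNum G' := by
  unfold _root_.indepNum
  congr 1
  ext n
  constructor
  · rintro ⟨s, hs, rfl⟩
    refine ⟨e '' s, ?_, ?_⟩
    · rintro u ⟨x, hx, rfl⟩ v ⟨y, hy, rfl⟩ hadj
      exact hs x hx y hy (e.map_adj_iff.1 hadj)
    · exact (Set.ncard_image_of_injective s e.toEquiv.injective).symm ▸ rfl
  · rintro ⟨s, hs, rfl⟩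
    refine ⟨e.symm '' s, ?_, ?_⟩
    · rintro u ⟨x, hx, rfl⟩ v ⟨y, hy, rfl⟩ hadj
      exact hs x hx y hy (e.symm.map_adj_iff.1 hadj)
    · exact (Set.ncard_image_of_injective s e.symm.toEquiv.injective).symm ▸ rfl

lemma sVal_iso (e : G ≃g G') : sVal G = sVal G' := by
  unfold sVal
  rw [numEdges_iso e, indepNum_iso e, Nat.card_congr e.toEquiv]
end IsoInv

section ConnCount
variable {V : Type} [Fintype V]

lemma numEdges_eq_card_edgeFinset (H : SimpleGraph V) [DecidableEq V] [DecidableRel H.Adj] :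
    numEdges H = H.edgeFinset.card := by
  rw [numEdges, Nat.card_eq_fintype_card, ← Set.toFinset_card]
  congr 1

lemma numEdges_delete (H : SimpleGraph V) {x y : V} (h : H.Adj x y) :
    numEdges (H \ fromEdgeSet {s(x, y)}) + 1 = numEdges H := by
  classical
  have hE : (H \ fromEdgeSet {s(x, y)}).edgeSet = H.edgeSet \ {s(x, y)} := by
    rw [edgeSet_sdiff, edgeSet_fromEdgeSet, edgeSet_sdiff_sdiff_isDiag]
  rw [numEdges, numEdges, Nat.card_coe_set_eq, Nat.card_coe_set_eq, hE,
    Set.ncard_diff_singleton_add_one (H.mem_edgeSet.2 h) (H.edgeSet.toFinite)]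

lemma reachable_of_chain {V' : Type} (H : SimpleGraph V')
    (K : SimpleGraph V') (hK : ∀ a b, H.Adj a b → K.Reachable a b) {x y : V'}
    (hr : H.Reachable x y) : K.Reachable x y := by
  obtain ⟨w⟩ := hr
  induction w with
  | nil => rfl
  | cons h p ih => exact (hK _ _ h).trans ih

lemma connected_delete_of_not_bridge (H : SimpleGraph V) {x y : V} (h : H.Adj x y)
    (hc : H.Connected) (hnb : ¬ H.IsBridge s(x, y)) :
    (H \ fromEdgeSet {s(x, y)}).Connected := by
  rw [isBridge_iff] at hnb
  push_neg at hnb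
  have hr := hnb
  rw [connected_iff] at hc ⊢
  refine ⟨fun a b => ?_, hc.2⟩
  refine reachable_of_chain H _ ?_ (hc.1 a b)
  intro a b hab
  by_cases he : s(a, b) = s(x, y)
  · rw [Sym2.eq_iff] at he
    rcases he with ⟨rfl, rfl⟩ | ⟨rfl, rfl⟩
    · exact hr
    · exact hr.symm
  · refine Adj.reachable ?_
    rw [sdiff_adj, fromEdgeSet_adj]
    exact ⟨hab, fun h' => he h'.1⟩

lemma conn_card_le (H : SimpleGraph V) (hc : H.Connected) :
    Fintype.card V ≤ numEdges H + 1 := by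
  classical
  generalize hn : numEdges H = n
  induction n using Nat.strong_induction_on generalizing H with
  | _ n ih =>
    by_cases hac : H.IsAcyclic
    · have ht : H.IsTree := ⟨hc, hac⟩
      have := ht.card_edgeFinset
      rw [← numEdges_eq_card_edgeFinset] at this
      omega
    · rw [isAcyclic_iff_forall_adj_isBridge] at hac
      push_neg at hac
      obtain ⟨x, y, hadj, hnb⟩ := hac
      have hc' := connected_delete_of_not_bridge H hadj hc hnb
      have hn' := numEdges_delete H hadj
      have := ih (numEdges (H \ fromEdgeSet {s(x, y)})) (by omega) _ hc' rfl
      omega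

lemma isTree_of_conn_card (H : SimpleGraph V) (hc : H.Connected)
    (hE : numEdges H + 1 = Fintype.card V) : H.IsTree := by
  classical
  refine ⟨hc, ?_⟩
  by_contra hac
  rw [isAcyclic_iff_forall_adj_isBridge] at hac
  push_neg at hac
  obtain ⟨x, y, hadj, hnb⟩ := hac
  have hc' := connected_delete_of_not_bridge H hadj hc hnb
  have hn' := numEdges_delete H hadj
  have := conn_card_le _ hc'
  omega

lemma numEdges_tree (H : SimpleGraph V) (ht : H.IsTree) :
    numEdges H + 1 = Fintype.card V := by
  classical
  rw [numEdges_eq_card_edgeFinset]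
  exact ht.card_edgeFinset
end ConnCount

section Helpers
variable {V : Type} [Fintype V] {H : SimpleGraph V}

lemma iso_helper {n : ℕ} (hcard : Fintype.card V = n) (f : Fin n → V)
    (hinj : Function.Injective f) (T : SimpleGraph (Fin n))
    (htab : ∀ i j, H.Adj (f i) (f j) ↔ T.Adj i j) : Nonempty (H ≃g T) := by
  have hbij : Function.Bijective f :=
    (Fintype.bijective_iff_injective_and_card f).2 ⟨hinj, by rw [hcard, Fintype.card_fin]⟩
  let e := Equiv.ofBijective f hbij
  refine ⟨⟨e.symm, ?_⟩⟩
  intro a b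
  have h2 := htab (e.symm a) (e.symm b)
  rw [show f (e.symm a) = a from e.apply_symm_apply a,
    show f (e.symm b) = b from e.apply_symm_apply b] at h2
  exact h2.symm

lemma surj_helper {n : ℕ} (hcard : Fintype.card V = n) (f : Fin n → V)
    (hinj : Function.Injective f) : ∀ x : V, ∃ i, f i = x := by
  have hbij : Function.Bijective f :=
    (Fintype.bijective_iff_injective_and_card f).2 ⟨hinj, by rw [hcard, Fintype.card_fin]⟩
  exact fun x => hbij.2 x

lemma edges_determined [DecidableEq V] [DecidableRel H.Adj] {K : Finset (Sym2 V)}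
    (h1 : ∀ e ∈ K, e ∈ H.edgeSet) (h2 : numEdges H ≤ K.card) :
    ∀ x y : V, H.Adj x y → s(x, y) ∈ K := by
  have hsub : K ⊆ H.edgeFinset := fun e he => by
    rw [mem_edgeFinset]; exact h1 e he
  have : H.edgeFinset = K :=
    (Finset.eq_of_subset_of_card_le hsub (by rw [← numEdges_eq_card_edgeFinset]; exact h2)).symm
  intro x y h
  rw [← this, mem_edgeFinset]
  exact h

lemma numEdges_le_of [DecidableEq V] [DecidableRel H.Adj] {K : Finset (Sym2 V)}
    (hsub : ∀ x y : V, H.Adj x y → s(x, y) ∈ K) : numEdges H ≤ K.card := by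
  rw [numEdges_eq_card_edgeFinset]
  refine Finset.card_le_card fun e he => ?_
  rw [mem_edgeFinset] at he
  induction e with
  | _ x y => exact hsub x y he

lemma edges_saturated [DecidableEq V] [DecidableRel H.Adj] {K : Finset (Sym2 V)}
    (hsub : ∀ x y : V, H.Adj x y → s(x, y) ∈ K) (hcard : K.card ≤ numEdges H) :
    ∀ x y : V, s(x, y) ∈ K → H.Adj x y := by
  have hsub' : H.edgeFinset ⊆ K := fun e he => by
    rw [mem_edgeFinset] at he
    induction e with
    | _ x y => exact hsub x y he
  have heq : H.edgeFinset = K :=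
    Finset.eq_of_subset_of_card_le hsub' (by rw [← numEdges_eq_card_edgeFinset]; exact hcard)
  intro x y h
  rw [← heq, mem_edgeFinset] at h
  exact h

lemma reachable_closed {R : Set V} (hcl : ∀ x ∈ R, ∀ y, H.Adj x y → y ∈ R)
    {x y : V} (hx : x ∈ R) (hr : H.Reachable x y) : y ∈ R := by
  obtain ⟨w⟩ := hr
  induction w with
  | nil => exact hx
  | cons h p ih => exact ih (hcl _ hx _ h)

lemma exists_adj_out (hc : H.Connected) {R : Set V} (hR : R.Nonempty) (hR' : R ≠ Set.univ) :
    ∃ a ∈ R, ∃ b, b ∉ R ∧ H.Adj a b := by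
  by_contra hcon
  push_neg at hcon
  obtain ⟨x, hx⟩ := hR
  obtain ⟨y, hy⟩ : ∃ y, y ∉ R := by
    by_contra h
    push_neg at h
    exact hR' (Set.eq_univ_of_forall h)
  refine hy (reachable_closed (fun a ha b hab => ?_) hx (hc.preconnected x y))
  by_contra hb
  exact hcon a ha b hb hab

lemma degree_eq_ncard [DecidableRel H.Adj] (v : V) :
    H.degree v = (H.neighborSet v).ncard := by
  rw [← card_neighborFinset_eq_degree, neighborFinset_def, Set.ncard_eq_toFinset_card']

lemma handshake [DecidableEq V] [DecidableRel H.Adj] :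
    ∑ v, H.degree v = 2 * numEdges H := by
  rw [numEdges_eq_card_edgeFinset]
  exact H.sum_degrees_eq_twice_card_edges

lemma degree_pos [DecidableRel H.Adj] (hc : H.Connected) (h2 : 2 ≤ Fintype.card V) (v : V) :
    1 ≤ H.degree v := by
  obtain ⟨a, ha, b, hb, hab⟩ := exists_adj_out (H := H) hc (R := {v}) ⟨v, rfl⟩ (by
    intro h
    have h1 : ({v} : Set V).ncard = Fintype.card V := by
      rw [h, Set.ncard_univ, Nat.card_eq_fintype_card]
    rw [Set.ncard_singleton] at h1
    omega)
  rcases ha with rfl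
  rw [degree_eq_ncard]
  have : b ∈ H.neighborSet a := hab
  have := Set.ncard_le_ncard (Set.singleton_subset_iff.2 this) (Set.toFinite _)
  simpa using this

lemma card_ge_two (a b : V) (h : a ≠ b) : 2 ≤ Fintype.card V := by
  have := Set.ncard_le_ncard (Set.subset_univ {a, b}) Set.finite_univ
  rw [Set.ncard_pair h, Set.ncard_univ, Nat.card_eq_fintype_card] at this
  exact this

lemma card_ge_three (a b c : V) (hab : a ≠ b) (hac : a ≠ c) (hbc : b ≠ c) :
    3 ≤ Fintype.card V := by
  have := Set.ncard_le_ncard (Set.subset_univ {a, b, c}) Set.finite_univ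
  rw [Set.ncard_eq_three.2 ⟨a, b, c, hab, hac, hbc, rfl⟩, Set.ncard_univ,
    Nat.card_eq_fintype_card] at this
  exact this

lemma ncard_compl_pair {a b : V} (h : a ≠ b) :
    ({a, b}ᶜ : Set V).ncard = Fintype.card V - 2 := by
  have := Set.ncard_add_ncard_compl ({a, b} : Set V)
  rw [Set.ncard_pair h, Nat.card_eq_fintype_card] at this
  omega

lemma ncard_compl_triple {a b c : V} (hab : a ≠ b) (hac : a ≠ c) (hbc : b ≠ c) :
    ({a, b, c}ᶜ : Set V).ncard = Fintype.card V - 3 := by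
  have := Set.ncard_add_ncard_compl ({a, b, c} : Set V)
  rw [Set.ncard_eq_three.2 ⟨a, b, c, hab, hac, hbc, rfl⟩, Nat.card_eq_fintype_card] at this
  omega

lemma exists_distinct3 {s : Set V} (h : 3 ≤ s.ncard) :
    ∃ a b c, a ∈ s ∧ b ∈ s ∧ c ∈ s ∧ a ≠ b ∧ a ≠ c ∧ b ≠ c := by
  obtain ⟨t, hts, ht⟩ := Set.exists_subset_card_eq (n := 3) (s := s) (by omega)
  obtain ⟨a, b, c, hab, hac, hbc, rfl⟩ := Set.ncard_eq_three.1 ht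
  exact ⟨a, b, c, hts (by simp), hts (show b ∈ ({a,b,c} : Set V) by simp),
    hts (show c ∈ ({a,b,c} : Set V) by simp), hab, hac, hbc⟩

lemma exists_distinct4 {s : Set V} (h : 4 ≤ s.ncard) :
    ∃ a b c d, a ∈ s ∧ b ∈ s ∧ c ∈ s ∧ d ∈ s ∧
      a ≠ b ∧ a ≠ c ∧ a ≠ d ∧ b ≠ c ∧ b ≠ d ∧ c ≠ d := by
  obtain ⟨a, b, c, ha, hb, hc, hab, hac, hbc⟩ := exists_distinct3 (s := s) (by omega)
  have hsub : ({a, b, c} : Set V) ⊆ s := by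
    rintro x (rfl | rfl | rfl) <;> assumption
  have hd : (s \ {a, b, c}).ncard ≠ 0 := by
    rw [Set.ncard_diff hsub, Set.ncard_eq_three.2 ⟨a, b, c, hab, hac, hbc, rfl⟩]
    omega
  obtain ⟨d, hd⟩ := Set.nonempty_of_ncard_ne_zero hd
  refine ⟨a, b, c, d, ha, hb, hc, hd.1, hab, hac, ?_, hbc, ?_, ?_⟩ <;>
  · intro h
    subst h
    simp at hd
end Helpers

set_option maxHeartbeats 1000000
section Cases
variable {V : Type} [Fintype V] {H : SimpleGraph V}

lemma case_P3 (hcard : Fintype.card V = 3)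
    (v u c : V) (hvu : v ≠ u) (hvc : v ≠ c) (huc : u ≠ c)
    (avu : H.Adj v u) (auc : H.Adj u c) (hE : numEdges H = 2) :
    Nonempty (H ≃g pathGraph 3) := by
  classical
  have hdet := edges_determined (H := H) (K := {s(v,u), s(u,c)})
    (by intro e he; simp at he; rcases he with rfl | rfl <;> simp [avu, auc])
    (by rw [hE]; rw [Finset.card_insert_of_notMem (by simp [Sym2.eq_iff]; tauto),
          Finset.card_singleton])
  have nvc : ¬ H.Adj v c := fun h => by
    have := hdet _ _ h; simp [Sym2.eq_iff] at this; tauto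
  have ncv : ¬ H.Adj c v := fun h => nvc h.symm
  refine iso_helper hcard ![v, u, c] ?_ _ ?_
  · intro i j hij
    fin_cases i <;> fin_cases j <;> simp_all
  · intro i j
    fin_cases i <;> fin_cases j <;>
      simp [pathGraph_adj, H.irrefl, avu, auc, avu.symm, auc.symm, nvc, ncv]

lemma case_P4 (hcard : Fintype.card V = 4)
    (v u c d : V) (hvu : v ≠ u) (hvc : v ≠ c) (hvd : v ≠ d) (huc : u ≠ c) (hud : u ≠ d)
    (hcd : c ≠ d)
    (avu : H.Adj v u) (auc : H.Adj u c) (acd : H.Adj c d) (hE : numEdges H = 3) :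
    Nonempty (H ≃g pathGraph 4) := by
  classical
  have hdet := edges_determined (H := H) (K := {s(v,u), s(u,c), s(c,d)})
    (by intro e he; simp at he; rcases he with rfl | rfl | rfl <;> simp [avu, auc, acd])
    (by rw [hE]
        rw [Finset.card_insert_of_notMem (by simp [Sym2.eq_iff]; tauto),
          Finset.card_insert_of_notMem (by simp [Sym2.eq_iff]; tauto), Finset.card_singleton])
  have nvc : ¬ H.Adj v c := fun h => by
    have := hdet _ _ h; simp [Sym2.eq_iff] at this; tauto
  have nvd : ¬ H.Adj v d := fun h => by
    have := hdet _ _ h; simp [Sym2.eq_iff] at this; tauto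
  have nud : ¬ H.Adj u d := fun h => by
    have := hdet _ _ h; simp [Sym2.eq_iff] at this; tauto
  have ncv : ¬ H.Adj c v := fun h => nvc h.symm
  have ndv : ¬ H.Adj d v := fun h => nvd h.symm
  have ndu : ¬ H.Adj d u := fun h => nud h.symm
  refine iso_helper hcard ![v, u, c, d] ?_ _ ?_
  · intro i j hij
    fin_cases i <;> fin_cases j <;> simp_all
  · intro i j
    fin_cases i <;> fin_cases j <;>
      simp +decide [pathGraph_adj, H.irrefl, avu, auc, acd, avu.symm, auc.symm, acd.symm,
        nvc, nvd, nud, ncv, ndv, ndu]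

lemma case_C4 (hcard : Fintype.card V = 4)
    (w0 w1 w2 w3 : V) (h01 : w0 ≠ w1) (h02 : w0 ≠ w2) (h03 : w0 ≠ w3) (h12 : w1 ≠ w2)
    (h13 : w1 ≠ w3) (h23 : w2 ≠ w3)
    (a01 : H.Adj w0 w1) (a12 : H.Adj w1 w2) (a23 : H.Adj w2 w3) (a30 : H.Adj w3 w0)
    (hE : numEdges H = 4) :
    Nonempty (H ≃g cycleGraph 4) := by
  classical
  have hdet := edges_determined (H := H) (K := {s(w0,w1), s(w1,w2), s(w2,w3), s(w3,w0)})
    (by intro e he; simp at he; rcases he with rfl | rfl | rfl | rfl <;> simp [a01, a12, a23, a30])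
    (by rw [hE]
        rw [Finset.card_insert_of_notMem (by simp [Sym2.eq_iff]; tauto),
          Finset.card_insert_of_notMem (by simp [Sym2.eq_iff]; tauto),
          Finset.card_insert_of_notMem (by simp [Sym2.eq_iff]; tauto), Finset.card_singleton])
  have n02 : ¬ H.Adj w0 w2 := fun h => by
    have := hdet _ _ h; simp [Sym2.eq_iff] at this; tauto
  have n13 : ¬ H.Adj w1 w3 := fun h => by
    have := hdet _ _ h; simp [Sym2.eq_iff] at this; tauto
  have n20 : ¬ H.Adj w2 w0 := fun h => n02 h.symm
  have n31 : ¬ H.Adj w3 w1 := fun h => n13 h.symm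
  refine iso_helper hcard ![w0, w1, w2, w3] ?_ _ ?_
  · intro i j hij
    fin_cases i <;> fin_cases j <;> simp_all
  · intro i j
    fin_cases i <;> fin_cases j <;>
      simp +decide [cycleGraph_adj', H.irrefl, a01, a12, a23, a30, a01.symm, a12.symm,
        a23.symm, a30.symm, n02, n13, n20, n31]

lemma case_C5 (hcard : Fintype.card V = 5)
    (w0 w1 w2 w3 w4 : V) (h01 : w0 ≠ w1) (h02 : w0 ≠ w2) (h03 : w0 ≠ w3) (h04 : w0 ≠ w4)
    (h12 : w1 ≠ w2) (h13 : w1 ≠ w3) (h14 : w1 ≠ w4) (h23 : w2 ≠ w3) (h24 : w2 ≠ w4)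
    (h34 : w3 ≠ w4)
    (a01 : H.Adj w0 w1) (a12 : H.Adj w1 w2) (a23 : H.Adj w2 w3) (a34 : H.Adj w3 w4)
    (a40 : H.Adj w4 w0) (hE : numEdges H = 5) :
    Nonempty (H ≃g cycleGraph 5) := by
  classical
  have hdet := edges_determined (H := H)
    (K := {s(w0,w1), s(w1,w2), s(w2,w3), s(w3,w4), s(w4,w0)})
    (by intro e he; simp at he
        rcases he with rfl | rfl | rfl | rfl | rfl <;> simp [a01, a12, a23, a34, a40])
    (by rw [hE]
        rw [Finset.card_insert_of_notMem (by simp [Sym2.eq_iff]; tauto),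
          Finset.card_insert_of_notMem (by simp [Sym2.eq_iff]; tauto),
          Finset.card_insert_of_notMem (by simp [Sym2.eq_iff]; tauto),
          Finset.card_insert_of_notMem (by simp [Sym2.eq_iff]; tauto), Finset.card_singleton])
  have n02 : ¬ H.Adj w0 w2 := fun h => by
    have := hdet _ _ h; simp [Sym2.eq_iff] at this; tauto
  have n03 : ¬ H.Adj w0 w3 := fun h => by
    have := hdet _ _ h; simp [Sym2.eq_iff] at this; tauto
  have n13 : ¬ H.Adj w1 w3 := fun h => by
    have := hdet _ _ h; simp [Sym2.eq_iff] at this; tauto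
  have n14 : ¬ H.Adj w1 w4 := fun h => by
    have := hdet _ _ h; simp [Sym2.eq_iff] at this; tauto
  have n24 : ¬ H.Adj w2 w4 := fun h => by
    have := hdet _ _ h; simp [Sym2.eq_iff] at this; tauto
  have n20 : ¬ H.Adj w2 w0 := fun h => n02 h.symm
  have n30 : ¬ H.Adj w3 w0 := fun h => n03 h.symm
  have n31 : ¬ H.Adj w3 w1 := fun h => n13 h.symm
  have n41 : ¬ H.Adj w4 w1 := fun h => n14 h.symm
  have n42 : ¬ H.Adj w4 w2 := fun h => n24 h.symm
  refine iso_helper hcard ![w0, w1, w2, w3, w4] ?_ _ ?_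
  · intro i j hij
    fin_cases i <;> fin_cases j <;> simp_all
  · intro i j
    fin_cases i <;> fin_cases j <;>
      simp +decide [cycleGraph_adj', H.irrefl, a01, a12, a23, a34, a40, a01.symm, a12.symm,
        a23.symm, a34.symm, a40.symm, n02, n03, n13, n14, n24, n20, n30, n31, n41, n42]

lemma case_TP1 (hcard : Fintype.card V = 4)
    (t0 t1 t2 p : V) (h01 : t0 ≠ t1) (h02 : t0 ≠ t2) (h0p : t0 ≠ p) (h12 : t1 ≠ t2)
    (h1p : t1 ≠ p) (h2p : t2 ≠ p)
    (a01 : H.Adj t0 t1) (a12 : H.Adj t1 t2) (a20 : H.Adj t2 t0) (a0p : H.Adj t0 p)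
    (hE : numEdges H = 4) :
    Nonempty (H ≃g trianglePendant1) := by
  classical
  have hdet := edges_determined (H := H) (K := {s(t0,t1), s(t1,t2), s(t2,t0), s(t0,p)})
    (by intro e he; simp at he; rcases he with rfl | rfl | rfl | rfl <;> simp [a01, a12, a20, a0p])
    (by rw [hE]
        rw [Finset.card_insert_of_notMem (by simp [Sym2.eq_iff]; tauto),
          Finset.card_insert_of_notMem (by simp [Sym2.eq_iff]; tauto),
          Finset.card_insert_of_notMem (by simp [Sym2.eq_iff]; tauto), Finset.card_singleton])
  have n1p : ¬ H.Adj t1 p := fun h => by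
    have := hdet _ _ h; simp [Sym2.eq_iff] at this; tauto
  have n2p : ¬ H.Adj t2 p := fun h => by
    have := hdet _ _ h; simp [Sym2.eq_iff] at this; tauto
  have np1 : ¬ H.Adj p t1 := fun h => n1p h.symm
  have np2 : ¬ H.Adj p t2 := fun h => n2p h.symm
  refine iso_helper hcard ![t0, t1, t2, p] ?_ _ ?_
  · intro i j hij
    fin_cases i <;> fin_cases j <;> simp_all
  · intro i j
    fin_cases i <;> fin_cases j <;>
      simp +decide [trianglePendant1, H.irrefl, a01, a12, a20, a0p, a01.symm, a12.symm,
        a20.symm, a0p.symm, n1p, n2p, np1, np2]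

lemma case_TP2 (hcard : Fintype.card V = 5)
    (t0 t1 t2 p q : V) (h01 : t0 ≠ t1) (h02 : t0 ≠ t2) (h0p : t0 ≠ p) (h0q : t0 ≠ q)
    (h12 : t1 ≠ t2) (h1p : t1 ≠ p) (h1q : t1 ≠ q) (h2p : t2 ≠ p) (h2q : t2 ≠ q) (hpq : p ≠ q)
    (a01 : H.Adj t0 t1) (a12 : H.Adj t1 t2) (a20 : H.Adj t2 t0) (a0p : H.Adj t0 p)
    (apq : H.Adj p q) (hE : numEdges H = 5) :
    Nonempty (H ≃g trianglePendant2) := by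
  classical
  have hdet := edges_determined (H := H) (K := {s(t0,t1), s(t1,t2), s(t2,t0), s(t0,p), s(p,q)})
    (by intro e he; simp at he
        rcases he with rfl | rfl | rfl | rfl | rfl <;> simp [a01, a12, a20, a0p, apq])
    (by rw [hE]
        rw [Finset.card_insert_of_notMem (by simp [Sym2.eq_iff]; tauto),
          Finset.card_insert_of_notMem (by simp [Sym2.eq_iff]; tauto),
          Finset.card_insert_of_notMem (by simp [Sym2.eq_iff]; tauto),
          Finset.card_insert_of_notMem (by simp [Sym2.eq_iff]; tauto), Finset.card_singleton])
  have n1p : ¬ H.Adj t1 p := fun h => by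
    have := hdet _ _ h; simp [Sym2.eq_iff] at this; tauto
  have n2p : ¬ H.Adj t2 p := fun h => by
    have := hdet _ _ h; simp [Sym2.eq_iff] at this; tauto
  have n0q : ¬ H.Adj t0 q := fun h => by
    have := hdet _ _ h; simp [Sym2.eq_iff] at this; tauto
  have n1q : ¬ H.Adj t1 q := fun h => by
    have := hdet _ _ h; simp [Sym2.eq_iff] at this; tauto
  have n2q : ¬ H.Adj t2 q := fun h => by
    have := hdet _ _ h; simp [Sym2.eq_iff] at this; tauto
  have np1 : ¬ H.Adj p t1 := fun h => n1p h.symm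
  have np2 : ¬ H.Adj p t2 := fun h => n2p h.symm
  have nq0 : ¬ H.Adj q t0 := fun h => n0q h.symm
  have nq1 : ¬ H.Adj q t1 := fun h => n1q h.symm
  have nq2 : ¬ H.Adj q t2 := fun h => n2q h.symm
  refine iso_helper hcard ![t0, t1, t2, p, q] ?_ _ ?_
  · intro i j hij
    fin_cases i <;> fin_cases j <;> simp_all
  · intro i j
    fin_cases i <;> fin_cases j <;>
      simp +decide [trianglePendant2, H.irrefl, a01, a12, a20, a0p, apq, a01.symm, a12.symm,
        a20.symm, a0p.symm, apq.symm, n1p, n2p, n0q, n1q, n2q, np1, np2, nq0, nq1, nq2]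

lemma iso_complete {n : ℕ} (hcomp : ∀ x y : V, x ≠ y → H.Adj x y)
    (hcard : Fintype.card V = n) : Nonempty (H ≃g completeGraph (Fin n)) := by
  have e := Fintype.equivFinOfCardEq hcard
  refine ⟨⟨e, ?_⟩⟩
  intro a b
  show e a ≠ e b ↔ H.Adj a b
  constructor
  · intro h
    exact hcomp a b fun hab => h (by rw [hab])
  · intro h hab
    exact H.ne_of_adj h (e.injective hab)
end Cases
section Mid
variable {V : Type} [Fintype V] {H : SimpleGraph V}

lemma adj_of_neighborSet {v u : V} (h : H.neighborSet v = {u}) : H.Adj v u := by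
  have : u ∈ H.neighborSet v := by rw [h]; rfl
  exact this

lemma not_adj_of_neighborSet {v u : V} (h : H.neighborSet v = {u}) {x : V} (hx : x ≠ u) :
    ¬ H.Adj v x := by
  intro hadj
  have : x ∈ H.neighborSet v := hadj
  rw [h] at this
  exact hx this

lemma complete_two_numEdges (hcomp : ∀ x y : V, x ≠ y → H.Adj x y) :
    2 * numEdges H = Fintype.card V * (Fintype.card V - 1) := by
  classical
  have hdeg : ∀ v : V, H.degree v = Fintype.card V - 1 := by
    intro v
    rw [degree_eq_ncard]
    have hN : H.neighborSet v = {v}ᶜ := by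
      ext u
      simp only [mem_neighborSet, Set.mem_compl_iff, Set.mem_singleton_iff]
      constructor
      · intro h h'
        exact H.ne_of_adj h (h'.symm)
      · intro h
        exact hcomp v u fun h' => h h'.symm
    rw [hN]
    have := Set.ncard_add_ncard_compl ({v} : Set V)
    rw [Set.ncard_singleton, Nat.card_eq_fintype_card] at this
    omega
  rw [← handshake]
  rw [Finset.sum_congr rfl (fun v _ => hdeg v), Finset.sum_const, smul_eq_mul,
    Finset.card_univ]

/-- The key counting bound used to exclude `n ≥ 5` (s=1) and `n ≥ 6` (s=2) in the leaf case. -/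
lemma leaf_bound [DecidableEq V] [DecidableRel H.Adj] (hconn : H.Connected)
    (v u b : V) (hNv : H.neighborSet v = {u}) (hub : H.Adj u b) (hbv : b ≠ v) (hbu : b ≠ u)
    (hclq : ∀ a ∈ ({v,u}ᶜ : Set V), ∀ a' ∈ ({v,u}ᶜ : Set V), a ≠ a' → H.Adj a a')
    (h5 : 5 ≤ Fintype.card V) :
    4 * Fintype.card V ≤ 2 * numEdges H + 11 := by
  set n := Fintype.card V with hn
  have avu : H.Adj v u := adj_of_neighborSet hNv
  have hvu : v ≠ u := H.ne_of_adj avu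
  have hcompl : ({v,u}ᶜ : Set V).ncard = n - 2 := ncard_compl_pair hvu
  obtain ⟨c1, c2, c3, hc1, hc2, hc3, h12, h13, h23⟩ :=
    exists_distinct3 (s := ({v,u}ᶜ : Set V)) (by omega)
  have hcv : ∀ c ∈ ({v,u}ᶜ : Set V), c ≠ v ∧ c ≠ u := by
    intro c hc
    simp only [Set.mem_compl_iff, Set.mem_insert_iff, Set.mem_singleton_iff] at hc
    push_neg at hc
    exact hc
  obtain ⟨hc1v, hc1u⟩ := hcv c1 hc1
  obtain ⟨hc2v, hc2u⟩ := hcv c2 hc2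
  obtain ⟨hc3v, hc3u⟩ := hcv c3 hc3
  -- the five chosen vertices
  set T : Finset V := {v, u, c1, c2, c3} with hT
  have hTcard : T.card = 5 := by
    rw [hT]
    rw [Finset.card_insert_of_notMem (by simp [hvu, Ne.symm hc1v, Ne.symm hc2v, Ne.symm hc3v]),
      Finset.card_insert_of_notMem (by simp [Ne.symm hc1u, Ne.symm hc2u, Ne.symm hc3u]),
      Finset.card_insert_of_notMem (by simp [h12, h13]),
      Finset.card_insert_of_notMem (by simp [h23]), Finset.card_singleton]
  have hdegv : H.degree v = 1 := by
    rw [degree_eq_ncard, hNv, Set.ncard_singleton]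
  have hdegu : 2 ≤ H.degree u := by
    rw [degree_eq_ncard]
    have hsub : ({v, b} : Set V) ⊆ H.neighborSet u := by
      rintro x (rfl | rfl)
      · exact avu.symm
      · exact hub
    have := Set.ncard_le_ncard hsub (Set.toFinite _)
    rwa [Set.ncard_pair (Ne.symm hbv)] at this
  have hdegc : ∀ c ∈ ({v,u}ᶜ : Set V), n - 3 ≤ H.degree c := by
    intro c hc
    rw [degree_eq_ncard]
    have hsub : (({v,u}ᶜ : Set V) \ {c}) ⊆ H.neighborSet c := by
      rintro x ⟨hx1, hx2⟩
      exact (hclq c hc x hx1 (fun h => hx2 (by simp [h.symm])))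
    have := Set.ncard_le_ncard hsub (Set.toFinite _)
    rwa [Set.ncard_diff_singleton_of_mem hc, hcompl] at this
  have hdeg1 : ∀ x : V, 1 ≤ H.degree x := degree_pos hconn (by omega)
  have hsum := handshake (H := H)
  have hsplit : ∑ x ∈ Finset.univ \ T, H.degree x + ∑ x ∈ T, H.degree x = ∑ x : V, H.degree x :=
    Finset.sum_sdiff (Finset.subset_univ T)
  have hTsum : H.degree v + (H.degree u + (H.degree c1 + (H.degree c2 + H.degree c3)))
      = ∑ x ∈ T, H.degree x := by
    rw [hT]
    rw [Finset.sum_insert (by simp [hvu, Ne.symm hc1v, Ne.symm hc2v, Ne.symm hc3v]),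
      Finset.sum_insert (by simp [Ne.symm hc1u, Ne.symm hc2u, Ne.symm hc3u]),
      Finset.sum_insert (by simp [h12, h13]),
      Finset.sum_insert (by simp [h23]), Finset.sum_singleton]
  have hrestcard : (Finset.univ \ T).card = n - 5 := by
    rw [Finset.card_sdiff_of_subset (Finset.subset_univ T), hTcard, Finset.card_univ]
  have hrest : n - 5 ≤ ∑ x ∈ Finset.univ \ T, H.degree x := by
    have h' := Finset.card_nsmul_le_sum (Finset.univ \ T) (fun x => H.degree x) 1
      (fun x _ => hdeg1 x)
    simpa [hrestcard] using h'
  have hq1 := hdegc c1 hc1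
  have hq2 := hdegc c2 hc2
  have hq3 := hdegc c3 hc3
  omega
end Mid
section Mid2
variable {V : Type} [Fintype V] {H : SimpleGraph V}

lemma mem_compl_pair {v u c : V} (hc : c ∈ ({v,u}ᶜ : Set V)) : c ≠ v ∧ c ≠ u := by
  simp only [Set.mem_compl_iff, Set.mem_insert_iff, Set.mem_singleton_iff] at hc
  push_neg at hc
  exact hc

lemma mem_compl_triple {v a b c : V} (hc : c ∈ ({v,a,b}ᶜ : Set V)) :
    c ≠ v ∧ c ≠ a ∧ c ≠ b := by
  simp only [Set.mem_compl_iff, Set.mem_insert_iff, Set.mem_singleton_iff] at hc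
  push_neg at hc
  exact hc

lemma leaf_clique (hα : _root_.indepNum H = 2) {v u : V} (hNv : H.neighborSet v = {u}) :
    ∀ a ∈ ({v,u}ᶜ : Set V), ∀ b ∈ ({v,u}ᶜ : Set V), a ≠ b → H.Adj a b := by
  intro a ha b hb hab
  by_contra hnadj
  obtain ⟨hav, hau⟩ := mem_compl_pair ha
  obtain ⟨hbv, hbu⟩ := mem_compl_pair hb
  have h3 := triple_le_indepNum (H := H) (a := v) (b := a) (c := b)
    (Ne.symm hav) (Ne.symm hbv) hab
    (not_adj_of_neighborSet hNv hau) (not_adj_of_neighborSet hNv hbu) hnadj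
  omega

lemma leaf_small (hconn : H.Connected) (hα : _root_.indepNum H = 2) {v u : V}
    (hNv : H.neighborSet v = {u}) : 3 ≤ Fintype.card V := by
  have avu : H.Adj v u := adj_of_neighborSet hNv
  have hvu : v ≠ u := H.ne_of_adj avu
  have hcompl : ({v,u}ᶜ : Set V).ncard = Fintype.card V - 2 := ncard_compl_pair hvu
  have hn2 : 2 ≤ Fintype.card V := card_ge_two v u hvu
  rcases Nat.lt_or_ge (Fintype.card V) 3 with hlt | h
  · exfalso
    have h0 : ({v,u}ᶜ : Set V) = ∅ :=
      (Set.ncard_eq_zero (Set.toFinite _)).1 (by omega)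
    obtain ⟨x, y, hxy, hnadj⟩ := exists_nonadj_of_two_le (H := H) (by omega)
    have hx : x = v ∨ x = u := by
      have hh : x ∉ ({v,u}ᶜ : Set V) := by rw [h0]; simp
      rw [Set.notMem_compl_iff] at hh
      simpa using hh
    have hy : y = v ∨ y = u := by
      have hh : y ∉ ({v,u}ᶜ : Set V) := by rw [h0]; simp
      rw [Set.notMem_compl_iff] at hh
      simpa using hh
    rcases hx with rfl | rfl <;> rcases hy with rfl | rfl
    · exact hxy rfl
    · exact hnadj avu
    · exact hnadj avu.symm
    · exact hxy rfl
  · exact h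

lemma leaf_out (hconn : H.Connected) {v u : V} (hNv : H.neighborSet v = {u})
    (hn3 : 3 ≤ Fintype.card V) :
    ∃ b, b ∈ ({v,u}ᶜ : Set V) ∧ H.Adj u b := by
  have avu : H.Adj v u := adj_of_neighborSet hNv
  have hvu : v ≠ u := H.ne_of_adj avu
  have hcompl : ({v,u}ᶜ : Set V).ncard = Fintype.card V - 2 := ncard_compl_pair hvu
  obtain ⟨a, ha, b, hb, hab⟩ := exists_adj_out hconn (R := ({v,u} : Set V)) ⟨v, by simp⟩ (by
    intro huniv
    have h0 : ({v,u}ᶜ : Set V) = ∅ := by rw [huniv]; simp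
    rw [h0] at hcompl
    simp at hcompl
    omega)
  have hb' : b ∈ ({v,u}ᶜ : Set V) := hb
  obtain ⟨hbv, hbu⟩ := mem_compl_pair hb'
  simp only [Set.mem_insert_iff, Set.mem_singleton_iff] at ha
  rcases ha with rfl | rfl
  · exfalso
    have : b ∈ H.neighborSet a := hab
    rw [hNv] at this
    exact hbu this
  · exact ⟨b, hb', hab⟩

lemma tree_leaf_s1 (hconn : H.Connected) (hα : _root_.indepNum H = 2)
    (hE1 : numEdges H + 1 = Fintype.card V)
    (v u : V) (hNv : H.neighborSet v = {u}) :
    Nonempty (H ≃g pathGraph 3) ∨ Nonempty (H ≃g pathGraph 4) := by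
  classical
  have avu : H.Adj v u := adj_of_neighborSet hNv
  have hvu : v ≠ u := H.ne_of_adj avu
  have hclq := leaf_clique hα hNv
  have hcompl : ({v,u}ᶜ : Set V).ncard = Fintype.card V - 2 := ncard_compl_pair hvu
  have hn3 : 3 ≤ Fintype.card V := leaf_small hconn hα hNv
  obtain ⟨b, hb', hab⟩ := leaf_out hconn hNv hn3
  obtain ⟨hbv, hbu⟩ := mem_compl_pair hb'
  rcases Nat.lt_or_ge (Fintype.card V) 5 with h5 | h5
  swap
  · exfalso
    have hbd := leaf_bound hconn v u b hNv hab hbv hbu hclq h5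
    omega
  rcases (show Fintype.card V = 3 ∨ Fintype.card V = 4 by omega) with h3 | h4
  · left
    exact case_P3 h3 v u b hvu (Ne.symm hbv) (Ne.symm hbu) avu hab (by omega)
  · right
    obtain ⟨c1, c2, hc12, hcompl_eq⟩ := Set.ncard_eq_two.1
      (show ({v,u}ᶜ : Set V).ncard = 2 by omega)
    have hc1 : c1 ∈ ({v,u}ᶜ : Set V) := by rw [hcompl_eq]; simp
    have hc2 : c2 ∈ ({v,u}ᶜ : Set V) := by rw [hcompl_eq]; simp
    obtain ⟨h1v, h1u⟩ := mem_compl_pair hc1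
    obtain ⟨h2v, h2u⟩ := mem_compl_pair hc2
    have hadj12 : H.Adj c1 c2 := hclq c1 hc1 c2 hc2 hc12
    have hbmem : b = c1 ∨ b = c2 := by
      rw [hcompl_eq] at hb'
      simpa using hb'
    rcases hbmem with rfl | rfl
    · exact case_P4 h4 v u b c2 hvu (Ne.symm hbv) (Ne.symm h2v) (Ne.symm hbu) (Ne.symm h2u)
        hc12 avu hab hadj12 (by omega)
    · exact case_P4 h4 v u b c1 hvu (Ne.symm hbv) (Ne.symm h1v) (Ne.symm hbu) (Ne.symm h1u)
        (Ne.symm hc12) avu hab hadj12.symm (by omega)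

lemma leaf_s2 (hconn : H.Connected) (hα : _root_.indepNum H = 2)
    (hE : numEdges H = Fintype.card V)
    (v u : V) (hNv : H.neighborSet v = {u}) :
    Nonempty (H ≃g trianglePendant1) ∨ Nonempty (H ≃g trianglePendant2) := by
  classical
  have avu : H.Adj v u := adj_of_neighborSet hNv
  have hvu : v ≠ u := H.ne_of_adj avu
  have hclq := leaf_clique hα hNv
  have hcompl : ({v,u}ᶜ : Set V).ncard = Fintype.card V - 2 := ncard_compl_pair hvu
  have hn3 : 3 ≤ Fintype.card V := leaf_small hconn hα hNv
  obtain ⟨b, hb', hab⟩ := leaf_out hconn hNv hn3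
  obtain ⟨hbv, hbu⟩ := mem_compl_pair hb'
  rcases Nat.lt_or_ge (Fintype.card V) 6 with h6 | h6
  swap
  · exfalso
    have hbd := leaf_bound hconn v u b hNv hab hbv hbu hclq (by omega)
    omega
  rcases (show Fintype.card V = 3 ∨ Fintype.card V = 4 ∨ Fintype.card V = 5 by omega)
    with h3 | h4 | h5
  · exfalso
    obtain ⟨c, hconly⟩ := Set.ncard_eq_one.1 (show ({v,u}ᶜ : Set V).ncard = 1 by omega)
    have hc : c ∈ ({v,u}ᶜ : Set V) := by rw [hconly]; rfl
    obtain ⟨hcv, hcu⟩ := mem_compl_pair hc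
    have hcover : ∀ x : V, x = v ∨ x = u ∨ x = c := by
      intro x
      by_cases hx : x ∈ ({v,u}ᶜ : Set V)
      · rw [hconly] at hx
        right; right; exact hx
      · simp only [Set.mem_compl_iff, Set.mem_insert_iff, Set.mem_singleton_iff,
          not_not] at hx
        rcases hx with rfl | rfl
        · left; rfl
        · right; left; rfl
    have nvc : ¬ H.Adj v c := not_adj_of_neighborSet hNv hcu
    have ncv : ¬ H.Adj c v := fun h => nvc h.symm
    have hle := numEdges_le_of (H := H) (K := {s(v,u), s(u,c)}) ?_
    · have : ({s(v,u), s(u,c)} : Finset (Sym2 V)).card ≤ 2 :=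
        le_trans (Finset.card_insert_le _ _) (by simp)
      omega
    · intro x y hxy
      rcases hcover x with rfl | rfl | rfl <;> rcases hcover y with rfl | rfl | rfl <;>
        first
        | exact absurd hxy (H.loopless.irrefl _)
        | exact absurd hxy nvc
        | exact absurd hxy ncv
        | simp [Sym2.eq_iff]
  · -- n = 4 : trianglePendant1
    obtain ⟨c1, c2, hc12, hcompl_eq⟩ := Set.ncard_eq_two.1
      (show ({v,u}ᶜ : Set V).ncard = 2 by omega)
    have hc1 : c1 ∈ ({v,u}ᶜ : Set V) := by rw [hcompl_eq]; simp
    have hc2 : c2 ∈ ({v,u}ᶜ : Set V) := by rw [hcompl_eq]; simp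
    obtain ⟨h1v, h1u⟩ := mem_compl_pair hc1
    obtain ⟨h2v, h2u⟩ := mem_compl_pair hc2
    have hadj12 : H.Adj c1 c2 := hclq c1 hc1 c2 hc2 hc12
    have nvc1 : ¬ H.Adj v c1 := not_adj_of_neighborSet hNv h1u
    have nvc2 : ¬ H.Adj v c2 := not_adj_of_neighborSet hNv h2u
    have nc1v : ¬ H.Adj c1 v := fun h => nvc1 h.symm
    have nc2v : ¬ H.Adj c2 v := fun h => nvc2 h.symm
    have hcover : ∀ x : V, x = v ∨ x = u ∨ x = c1 ∨ x = c2 := by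
      intro x
      by_cases hx : x ∈ ({v,u}ᶜ : Set V)
      · rw [hcompl_eq] at hx
        rcases hx with rfl | rfl
        · right; right; left; rfl
        · right; right; right; rfl
      · simp only [Set.mem_compl_iff, Set.mem_insert_iff, Set.mem_singleton_iff,
          not_not] at hx
        rcases hx with rfl | rfl
        · left; rfl
        · right; left; rfl
    have hsat := edges_saturated (H := H) (K := {s(v,u), s(c1,c2), s(u,c1), s(u,c2)}) ?_ ?_
    · have auc1 : H.Adj u c1 := hsat u c1 (by simp)
      have auc2 : H.Adj u c2 := hsat u c2 (by simp)
      left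
      exact case_TP1 h4 u c1 c2 v (Ne.symm h1u) (Ne.symm h2u) (Ne.symm hvu) hc12 h1v h2v
        auc1 hadj12 auc2.symm avu.symm (by omega)
    · intro x y hxy
      rcases hcover x with rfl | rfl | rfl | rfl <;> rcases hcover y with rfl | rfl | rfl | rfl <;>
        first
        | exact absurd hxy (H.loopless.irrefl _)
        | exact absurd hxy nvc1
        | exact absurd hxy nvc2
        | exact absurd hxy nc1v
        | exact absurd hxy nc2v
        | simp [Sym2.eq_iff]
    · rw [hE, h4]
      rw [Finset.card_insert_of_notMem (by simp [Sym2.eq_iff]; tauto),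
        Finset.card_insert_of_notMem (by simp [Sym2.eq_iff]; tauto),
        Finset.card_insert_of_notMem (by simp [Sym2.eq_iff]; tauto), Finset.card_singleton]
  · -- n = 5 : trianglePendant2
    right
    obtain ⟨c1, c2, c3, h12, h13, h23, hcompl_eq⟩ := Set.ncard_eq_three.1
      (show ({v,u}ᶜ : Set V).ncard = 3 by omega)
    have hc1 : c1 ∈ ({v,u}ᶜ : Set V) := by rw [hcompl_eq]; simp
    have hc2 : c2 ∈ ({v,u}ᶜ : Set V) := by rw [hcompl_eq]; simp
    have hc3 : c3 ∈ ({v,u}ᶜ : Set V) := by rw [hcompl_eq]; simp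
    obtain ⟨h1v, h1u⟩ := mem_compl_pair hc1
    obtain ⟨h2v, h2u⟩ := mem_compl_pair hc2
    obtain ⟨h3v, h3u⟩ := mem_compl_pair hc3
    have a12 : H.Adj c1 c2 := hclq c1 hc1 c2 hc2 h12
    have a13 : H.Adj c1 c3 := hclq c1 hc1 c3 hc3 h13
    have a23 : H.Adj c2 c3 := hclq c2 hc2 c3 hc3 h23
    have hbmem : b = c1 ∨ b = c2 ∨ b = c3 := by
      rw [hcompl_eq] at hb'
      simpa using hb'
    have hE5 : numEdges H = 5 := by omega
    rcases hbmem with rfl | rfl | rfl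
    · exact case_TP2 h5 b c2 c3 u v h12 h13 hbu hbv h23 h2u h2v h3u h3v (Ne.symm hvu)
        a12 a23 a13.symm hab.symm avu.symm hE5
    · exact case_TP2 h5 b c3 c1 u v h23 (Ne.symm h12) hbu hbv
        (Ne.symm h13) h3u h3v h1u h1v (Ne.symm hvu)
        a23 a13.symm a12 hab.symm avu.symm hE5
    · exact case_TP2 h5 b c1 c2 u v (Ne.symm h13) (Ne.symm h23) hbu hbv
        h12 h1u h1v h2u h2v (Ne.symm hvu)
        a13.symm a12 a23 hab.symm avu.symm hE5
end Mid2
section Mid3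
variable {V : Type} [Fintype V] {H : SimpleGraph V}

lemma two_regular_s2 [DecidableEq V] [DecidableRel H.Adj] (hconn : H.Connected)
    (hα : _root_.indepNum H = 2) (hE : numEdges H = Fintype.card V)
    (hreg : ∀ x : V, H.degree x = 2) :
    Nonempty (H ≃g cycleGraph 4) ∨ Nonempty (H ≃g cycleGraph 5) := by
  obtain ⟨v⟩ := hconn.nonempty
  have hNv2 : (H.neighborSet v).ncard = 2 := by rw [← degree_eq_ncard]; exact hreg v
  obtain ⟨a, b, hab, hNv⟩ := Set.ncard_eq_two.1 hNv2
  have hva : H.Adj v a := by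
    have : a ∈ H.neighborSet v := by rw [hNv]; simp
    exact this
  have hvb : H.Adj v b := by
    have : b ∈ H.neighborSet v := by rw [hNv]; simp
    exact this
  have hvna : v ≠ a := H.ne_of_adj hva
  have hvnb : v ≠ b := H.ne_of_adj hvb
  have hnadj_v : ∀ x, x ≠ a → x ≠ b → ¬ H.Adj v x := by
    intro x hxa hxb hadj
    have : x ∈ H.neighborSet v := hadj
    rw [hNv] at this
    rcases this with rfl | rfl
    · exact hxa rfl
    · exact hxb rfl
  have hclq : ∀ x ∈ ({v,a,b}ᶜ : Set V), ∀ y ∈ ({v,a,b}ᶜ : Set V), x ≠ y → H.Adj x y := by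
    intro x hx y hy hxy
    obtain ⟨hxv, hxa, hxb⟩ := mem_compl_triple hx
    obtain ⟨hyv, hya, hyb⟩ := mem_compl_triple hy
    by_contra hnadj
    have h3 := triple_le_indepNum (H := H) (a := v) (b := x) (c := y)
      (Ne.symm hxv) (Ne.symm hyv) hxy (hnadj_v x hxa hxb) (hnadj_v y hya hyb) hnadj
    omega
  have hcompl : ({v,a,b}ᶜ : Set V).ncard = Fintype.card V - 3 :=
    ncard_compl_triple hvna hvnb hab
  have hn3 : 3 ≤ Fintype.card V := card_ge_three v a b hvna hvnb hab
  have hcover : ∀ x : V, x ∉ ({v,a,b}ᶜ : Set V) → x = v ∨ x = a ∨ x = b := by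
    intro x hx
    rw [Set.notMem_compl_iff] at hx
    simpa using hx
  have hdeg_of : ∀ x : V, (H.neighborSet x).ncard = 2 := by
    intro x
    rw [← degree_eq_ncard]
    exact hreg x
  have h6 : Fintype.card V ≤ 6 := by
    by_contra hgt
    push_neg at hgt
    obtain ⟨c1, c2, c3, c4, hc1, hc2, hc3, hc4, d12, d13, d14, d23, d24, d34⟩ :=
      exists_distinct4 (s := ({v,a,b}ᶜ : Set V)) (by omega)
    have hsub : ({c2, c3, c4} : Set V) ⊆ H.neighborSet c1 := by
      rintro x (rfl | rfl | rfl)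
      · exact hclq c1 hc1 x hc2 d12
      · exact hclq c1 hc1 x hc3 d13
      · exact hclq c1 hc1 x hc4 d14
    have hle := Set.ncard_le_ncard hsub (Set.toFinite _)
    rw [Set.ncard_eq_three.2 ⟨c2, c3, c4, d23, d24, d34, rfl⟩, hdeg_of c1] at hle
    omega
  rcases (show Fintype.card V = 3 ∨ Fintype.card V = 4 ∨ Fintype.card V = 5 ∨
    Fintype.card V = 6 by omega) with h3 | h4 | h5 | h6'
  · -- n = 3 : impossible (triangle has _root_.indepNum 1)
    exfalso
    have h0 : ({v,a,b}ᶜ : Set V) = ∅ :=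
      (Set.ncard_eq_zero (Set.toFinite _)).1 (by omega)
    have hcov : ∀ x : V, x = v ∨ x = a ∨ x = b := by
      intro x
      refine hcover x ?_
      rw [h0]
      simp
    -- a and b are adjacent
    obtain ⟨t, ht, htv⟩ := Set.exists_ne_of_one_lt_ncard (by rw [hdeg_of a]; omega) v
    have hat : H.Adj a t := ht
    have hta : t ≠ a := fun h => H.loopless.irrefl a (h ▸ hat)
    have htb : t = b := by
      rcases hcov t with rfl | rfl | rfl
      · exact absurd rfl htv
      · exact absurd rfl hta
      · rfl
    subst htb
    obtain ⟨x, y, hxy, hnadj⟩ := exists_nonadj_of_two_le (H := H) (by omega)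
    rcases hcov x with rfl | rfl | rfl <;> rcases hcov y with rfl | rfl | rfl <;>
      first
      | exact hxy rfl
      | exact hnadj hva
      | exact hnadj hvb
      | exact hnadj hva.symm
      | exact hnadj hvb.symm
      | exact hnadj hat
      | exact hnadj hat.symm
  · -- n = 4 : C4
    left
    obtain ⟨c, hconly⟩ := Set.ncard_eq_one.1 (show ({v,a,b}ᶜ : Set V).ncard = 1 by omega)
    have hc : c ∈ ({v,a,b}ᶜ : Set V) := by rw [hconly]; rfl
    obtain ⟨hcv, hca, hcb⟩ := mem_compl_triple hc
    have hNc : H.neighborSet c ⊆ {a, b} := by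
      intro x hx
      have hadj : H.Adj c x := hx
      have hxc : x ≠ c := fun h => H.loopless.irrefl c (h ▸ hadj)
      have hxv : x ≠ v := by
        rintro rfl
        exact hnadj_v c hca hcb hadj.symm
      have : x ∉ ({v,a,b}ᶜ : Set V) := by
        rw [hconly]
        simpa using hxc
      rcases hcover x this with rfl | rfl | rfl
      · exact absurd rfl hxv
      · simp
      · simp
    have hNceq : H.neighborSet c = {a, b} :=
      Set.eq_of_subset_of_ncard_le hNc (by rw [hdeg_of c, Set.ncard_pair hab]) (Set.toFinite _)
    have hca' : H.Adj c a := by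
      have : a ∈ H.neighborSet c := by rw [hNceq]; simp
      exact this
    have hcb' : H.Adj c b := by
      have : b ∈ H.neighborSet c := by rw [hNceq]; simp
      exact this
    have hnab : ¬ H.Adj a b := by
      intro hadj
      have hsub : ({v, b, c} : Set V) ⊆ H.neighborSet a := by
        rintro x (rfl | rfl | rfl)
        · exact hva.symm
        · exact hadj
        · exact hca'.symm
      have hle := Set.ncard_le_ncard hsub (Set.toFinite _)
      rw [Set.ncard_eq_three.2 ⟨v, b, c, hvnb, Ne.symm hcv, Ne.symm hcb, rfl⟩,
        hdeg_of a] at hle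
      omega
    exact case_C4 h4 v a c b hvna (Ne.symm hcv) hvnb (Ne.symm hca) hab hcb
      hva hca'.symm hcb' hvb.symm (by omega)
  · -- n = 5 : C5
    right
    obtain ⟨c1, c2, hc12, hcompl_eq⟩ := Set.ncard_eq_two.1
      (show ({v,a,b}ᶜ : Set V).ncard = 2 by omega)
    have hc1 : c1 ∈ ({v,a,b}ᶜ : Set V) := by rw [hcompl_eq]; simp
    have hc2 : c2 ∈ ({v,a,b}ᶜ : Set V) := by rw [hcompl_eq]; simp
    obtain ⟨h1v, h1a, h1b⟩ := mem_compl_triple hc1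
    obtain ⟨h2v, h2a, h2b⟩ := mem_compl_triple hc2
    have hnab : ¬ H.Adj a b := by
      intro hadj
      have hNa : H.neighborSet a = {v, b} := by
        refine (Set.eq_of_subset_of_ncard_le ?_ ?_ (Set.toFinite _)).symm
        · rintro x (rfl | rfl)
          · exact hva.symm
          · exact hadj
        · rw [hdeg_of a, Set.ncard_pair hvnb]
      have hNb : H.neighborSet b = {v, a} := by
        refine (Set.eq_of_subset_of_ncard_le ?_ ?_ (Set.toFinite _)).symm
        · rintro x (rfl | rfl)
          · exact hvb.symm
          · exact hadj.symm
        · rw [hdeg_of b, Set.ncard_pair hvna]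
      obtain ⟨x, hx, y, hy, hadjxy⟩ := exists_adj_out hconn (R := ({v,a,b} : Set V))
        ⟨v, by simp⟩ (by
          intro huniv
          have : c1 ∈ ({v,a,b}ᶜ : Set V) := hc1
          rw [huniv] at this
          simp at this)
      simp only [Set.mem_insert_iff, Set.mem_singleton_iff] at hx
      rcases hx with rfl | rfl | rfl
      · have : y ∈ H.neighborSet x := hadjxy
        rw [hNv] at this
        rcases this with rfl | rfl
        · exact hy (by simp)
        · exact hy (by simp)
      · have : y ∈ H.neighborSet x := hadjxy
        rw [hNa] at this
        rcases this with rfl | rfl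
        · exact hy (by simp)
        · exact hy (by simp)
      · have : y ∈ H.neighborSet x := hadjxy
        rw [hNb] at this
        rcases this with rfl | rfl
        · exact hy (by simp)
        · exact hy (by simp)
    have hadjc : H.Adj c1 c2 := hclq c1 hc1 c2 hc2 hc12
    have key : ∀ d1 d2 : V, d1 ≠ d2 → ({v,a,b}ᶜ : Set V) = {d1, d2} → H.Adj a d1 →
        Nonempty (H ≃g cycleGraph 5) := by
      intro d1 d2 hd12 hceq had1
      have hd1 : d1 ∈ ({v,a,b}ᶜ : Set V) := by rw [hceq]; simp
      have hd2 : d2 ∈ ({v,a,b}ᶜ : Set V) := by rw [hceq]; simp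
      obtain ⟨hd1v, hd1a, hd1b⟩ := mem_compl_triple hd1
      obtain ⟨hd2v, hd2a, hd2b⟩ := mem_compl_triple hd2
      have hadjd : H.Adj d1 d2 := hclq d1 hd1 d2 hd2 hd12
      -- second neighbor of b
      obtain ⟨t, ht, htv⟩ := Set.exists_ne_of_one_lt_ncard (by rw [hdeg_of b]; omega) v
      have hbt : H.Adj b t := ht
      have htb : t ≠ b := fun h => H.loopless.irrefl b (h ▸ hbt)
      have hta : t ≠ a := by
        rintro rfl
        exact hnab hbt.symm
      have htmem : t ∈ ({v,a,b}ᶜ : Set V) := by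
        simp only [Set.mem_compl_iff, Set.mem_insert_iff, Set.mem_singleton_iff]
        push_neg
        exact ⟨htv, hta, htb⟩
      rw [hceq] at htmem
      have htd : t = d1 ∨ t = d2 := by simpa using htmem
      rcases htd with rfl | rfl
      · exfalso
        have hsub : ({a, b, d2} : Set V) ⊆ H.neighborSet t := by
          rintro x (rfl | rfl | rfl)
          · exact had1.symm
          · exact hbt.symm
          · exact hadjd
        have hle := Set.ncard_le_ncard hsub (Set.toFinite _)
        rw [Set.ncard_eq_three.2 ⟨a, b, d2, hab, Ne.symm hd2a, Ne.symm hd2b, rfl⟩,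
          hdeg_of t] at hle
        omega
      · exact case_C5 h5 v a d1 t b hvna (Ne.symm hd1v) (Ne.symm htv) hvnb
          (Ne.symm hd1a) (Ne.symm hta) hab hd12 hd1b htb
          hva had1 hadjd hbt.symm hvb.symm (by omega)
    -- second neighbor of a
    obtain ⟨t, ht, htv⟩ := Set.exists_ne_of_one_lt_ncard (by rw [hdeg_of a]; omega) v
    have hat : H.Adj a t := ht
    have hta : t ≠ a := fun h => H.loopless.irrefl a (h ▸ hat)
    have htb : t ≠ b := by
      rintro rfl
      exact hnab hat
    have htmem : t ∈ ({v,a,b}ᶜ : Set V) := by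
      simp only [Set.mem_compl_iff, Set.mem_insert_iff, Set.mem_singleton_iff]
      push_neg
      exact ⟨htv, hta, htb⟩
    rw [hcompl_eq] at htmem
    rcases (by simpa using htmem : t = c1 ∨ t = c2) with rfl | rfl
    · exact key t c2 hc12 hcompl_eq hat
    · exact key t c1 (Ne.symm hc12) (by rw [hcompl_eq, Set.pair_comm]) hat
  · -- n = 6 : impossible
    exfalso
    obtain ⟨c1, c2, c3, h12, h13, h23, hcompl_eq⟩ := Set.ncard_eq_three.1
      (show ({v,a,b}ᶜ : Set V).ncard = 3 by omega)
    have hc1 : c1 ∈ ({v,a,b}ᶜ : Set V) := by rw [hcompl_eq]; simp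
    have hc2 : c2 ∈ ({v,a,b}ᶜ : Set V) := by rw [hcompl_eq]; simp
    have hc3 : c3 ∈ ({v,a,b}ᶜ : Set V) := by rw [hcompl_eq]; simp
    obtain ⟨h1v, h1a, h1b⟩ := mem_compl_triple hc1
    obtain ⟨h2v, h2a, h2b⟩ := mem_compl_triple hc2
    obtain ⟨h3v, h3a, h3b⟩ := mem_compl_triple hc3
    have hN1 : H.neighborSet c1 = {c2, c3} := by
      refine (Set.eq_of_subset_of_ncard_le ?_ ?_ (Set.toFinite _)).symm
      · rintro x (rfl | rfl)
        · exact hclq _ hc1 _ hc2 h12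
        · exact hclq _ hc1 _ hc3 h13
      · rw [hdeg_of c1, Set.ncard_pair h23]
    have hN2 : H.neighborSet c2 = {c1, c3} := by
      refine (Set.eq_of_subset_of_ncard_le ?_ ?_ (Set.toFinite _)).symm
      · rintro x (rfl | rfl)
        · exact (hclq _ hc1 _ hc2 h12).symm
        · exact hclq _ hc2 _ hc3 h23
      · rw [hdeg_of c2, Set.ncard_pair h13]
    have hN3 : H.neighborSet c3 = {c1, c2} := by
      refine (Set.eq_of_subset_of_ncard_le ?_ ?_ (Set.toFinite _)).symm
      · rintro x (rfl | rfl)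
        · exact (hclq _ hc1 _ hc3 h13).symm
        · exact (hclq _ hc2 _ hc3 h23).symm
      · rw [hdeg_of c3, Set.ncard_pair h12]
    obtain ⟨x, hx, y, hy, hadjxy⟩ := exists_adj_out hconn (R := ({c1,c2,c3} : Set V))
      ⟨c1, by simp⟩ (by
        intro huniv
        have hvmem : v ∈ ({c1,c2,c3} : Set V) := by rw [huniv]; trivial
        rcases hvmem with h | h | h
        · exact h1v h.symm
        · exact h2v h.symm
        · exact h3v h.symm)
    simp only [Set.mem_insert_iff, Set.mem_singleton_iff] at hx
    rcases hx with rfl | rfl | rfl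
    · have : y ∈ H.neighborSet x := hadjxy
      rw [hN1] at this
      rcases this with rfl | rfl
      · exact hy (by simp)
      · exact hy (by simp)
    · have : y ∈ H.neighborSet x := hadjxy
      rw [hN2] at this
      rcases this with rfl | rfl
      · exact hy (by simp)
      · exact hy (by simp)
    · have : y ∈ H.neighborSet x := hadjxy
      rw [hN3] at this
      rcases this with rfl | rfl
      · exact hy (by simp)
      · exact hy (by simp)
end Mid3
section Concrete

instance : DecidableRel trianglePendant1.Adj := fun a b =>
  inferInstanceAs (Decidable (a ≠ b ∧ _))

instance : DecidableRel trianglePendant2.Adj := fun a b =>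
  inferInstanceAs (Decidable (a ≠ b ∧ _))

lemma sVal_concrete {n : ℕ} (T : SimpleGraph (Fin n)) (e k : ℕ)
    (hE : numEdges T = e) (hα : _root_.indepNum T = k) : sVal T = (e : ℤ) - n + k := by
  unfold sVal
  rw [hE, hα, Nat.card_eq_fintype_card, Fintype.card_fin]

lemma sVal_K1 : sVal (completeGraph (Fin 1)) = 0 := by
  rw [sVal_concrete _ 0 1 (by rw [numEdges_eq_card_edgeFinset]; decide)
    (le_antisymm (indepNum_le_one (by decide)) one_le_indepNum)]
  norm_num

lemma sVal_K2 : sVal (completeGraph (Fin 2)) = 0 := by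
  rw [sVal_concrete _ 1 1 (by rw [numEdges_eq_card_edgeFinset]; decide)
    (le_antisymm (indepNum_le_one (by decide)) one_le_indepNum)]
  norm_num

lemma sVal_K3 : sVal (completeGraph (Fin 3)) = 1 := by
  rw [sVal_concrete _ 3 1 (by rw [numEdges_eq_card_edgeFinset]; decide)
    (le_antisymm (indepNum_le_one (by decide)) one_le_indepNum)]
  norm_num

lemma sVal_P3 : sVal (pathGraph 3) = 1 := by
  rw [sVal_concrete _ 2 2 (by rw [numEdges_eq_card_edgeFinset]; decide)
    (le_antisymm (indepNum_le_two (by decide))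
      (pair_le_indepNum (a := (0 : Fin 3)) (b := 2) (by decide) (by decide)))]
  norm_num

lemma sVal_P4 : sVal (pathGraph 4) = 1 := by
  rw [sVal_concrete _ 3 2 (by rw [numEdges_eq_card_edgeFinset]; decide)
    (le_antisymm (indepNum_le_two (by decide))
      (pair_le_indepNum (a := (0 : Fin 4)) (b := 2) (by decide) (by decide)))]
  norm_num

lemma sVal_C4 : sVal (cycleGraph 4) = 2 := by
  rw [sVal_concrete _ 4 2 (by rw [numEdges_eq_card_edgeFinset]; decide)
    (le_antisymm (indepNum_le_two (by decide))
      (pair_le_indepNum (a := (0 : Fin 4)) (b := 2) (by decide) (by decide)))]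
  norm_num

lemma sVal_C5 : sVal (cycleGraph 5) = 2 := by
  rw [sVal_concrete _ 5 2 (by rw [numEdges_eq_card_edgeFinset]; decide)
    (le_antisymm (indepNum_le_two (by decide))
      (pair_le_indepNum (a := (0 : Fin 5)) (b := 2) (by decide) (by decide)))]
  norm_num

lemma sVal_TP1 : sVal trianglePendant1 = 2 := by
  rw [sVal_concrete _ 4 2 (by rw [numEdges_eq_card_edgeFinset]; decide)
    (le_antisymm (indepNum_le_two (by decide))
      (pair_le_indepNum (a := (1 : Fin 4)) (b := 3) (by decide) (by decide)))]
  norm_num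

lemma sVal_TP2 : sVal trianglePendant2 = 2 := by
  rw [sVal_concrete _ 5 2 (by rw [numEdges_eq_card_edgeFinset]; decide)
    (le_antisymm (indepNum_le_two (by decide))
      (pair_le_indepNum (a := (1 : Fin 5)) (b := 3) (by decide) (by decide)))]
  norm_num

end Concrete

section Forward
variable {V : Type} [Fintype V] {H : SimpleGraph V}

lemma forward0 (hconn : H.Connected) (hs : sVal H = 0) :
    Nonempty (H ≃g completeGraph (Fin 1)) ∨ Nonempty (H ≃g completeGraph (Fin 2)) := by
  classical
  have hne : Nonempty V := hconn.nonempty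
  have hcard : Nat.card V = Fintype.card V := Nat.card_eq_fintype_card
  have hEn := conn_card_le H hconn
  have hα1 : 1 ≤ _root_.indepNum H := one_le_indepNum
  have heq : numEdges H + _root_.indepNum H = Fintype.card V := by
    unfold sVal at hs
    omega
  have hcomp : ∀ x y : V, x ≠ y → H.Adj x y := by
    intro x y hxy
    by_contra hn
    have := pair_le_indepNum hxy hn
    omega
  have h2E := complete_two_numEdges hcomp
  have hn1 : 1 ≤ Fintype.card V := Fintype.card_pos
  rcases Nat.lt_or_ge (Fintype.card V) 3 with h3 | h3
  · rcases (show Fintype.card V = 1 ∨ Fintype.card V = 2 by omega) with h | h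
    · exact Or.inl (iso_complete hcomp h)
    · exact Or.inr (iso_complete hcomp h)
  · exfalso
    have hmul : 3 * (Fintype.card V - 1) ≤ Fintype.card V * (Fintype.card V - 1) :=
      Nat.mul_le_mul_right _ h3
    omega

lemma exists_leaf (hconn : H.Connected) [DecidableEq V] [DecidableRel H.Adj]
    (hn2 : 2 ≤ Fintype.card V) (hsmall : 2 * numEdges H < 2 * Fintype.card V) :
    ∃ x u, H.neighborSet x = {u} := by
  have hdeg1 : ∀ x, 1 ≤ H.degree x := degree_pos hconn hn2
  have hleaf : ∃ x, H.degree x = 1 := by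
    by_contra hno
    push_neg at hno
    have hsum := handshake (H := H)
    have hge : (Finset.univ : Finset V).card * 2 ≤ ∑ x, H.degree x := by
      have h' := Finset.card_nsmul_le_sum (Finset.univ : Finset V) (fun x => H.degree x) 2
        (fun x _ => by
          show 2 ≤ H.degree x
          have h1 := hdeg1 x
          have h2 := hno x
          omega)
      rw [smul_eq_mul] at h'
      exact h'
    rw [Finset.card_univ] at hge
    omega
  obtain ⟨x, hx⟩ := hleaf
  rw [degree_eq_ncard] at hx
  obtain ⟨u, hu⟩ := Set.ncard_eq_one.1 hx
  exact ⟨x, u, hu⟩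

lemma forward1 (hconn : H.Connected) (hs : sVal H = 1) :
    Nonempty (H ≃g completeGraph (Fin 3)) ∨
      Nonempty (H ≃g pathGraph 3) ∨ Nonempty (H ≃g pathGraph 4) := by
  classical
  have hne : Nonempty V := hconn.nonempty
  have hcard : Nat.card V = Fintype.card V := Nat.card_eq_fintype_card
  have hEn := conn_card_le H hconn
  have hα1 : 1 ≤ _root_.indepNum H := one_le_indepNum
  have hαn : _root_.indepNum H ≤ Fintype.card V := indepNum_le_card
  have hn1 : 1 ≤ Fintype.card V := Fintype.card_pos
  have heq : numEdges H + _root_.indepNum H = Fintype.card V + 1 := by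
    unfold sVal at hs
    omega
  have hαle : _root_.indepNum H ≤ 2 := by omega
  rcases (show _root_.indepNum H = 1 ∨ _root_.indepNum H = 2 by omega) with hα | hα
  · -- complete, must be a triangle
    left
    have hcomp : ∀ x y : V, x ≠ y → H.Adj x y := by
      intro x y hxy
      by_contra hn
      have := pair_le_indepNum hxy hn
      omega
    have h2E := complete_two_numEdges hcomp
    have hn3 : Fintype.card V ≤ 3 := by
      by_contra h
      push_neg at h
      have hmul : 4 * (Fintype.card V - 1) ≤ Fintype.card V * (Fintype.card V - 1) :=
        Nat.mul_le_mul_right _ (by omega)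
      omega
    rcases (show Fintype.card V = 1 ∨ Fintype.card V = 2 ∨ Fintype.card V = 3 by omega)
      with h | h | h
    · rw [h] at h2E
      omega
    · rw [h] at h2E
      omega
    · exact iso_complete hcomp h
  · right
    have hn2 : 2 ≤ Fintype.card V := by omega
    obtain ⟨x, u, hNx⟩ := exists_leaf hconn hn2 (by omega)
    exact tree_leaf_s1 hconn hα (by omega) x u hNx

lemma forward2 (hconn : H.Connected) (hs : sVal H = 2) :
    Nonempty (H ≃g cycleGraph 4) ∨ Nonempty (H ≃g cycleGraph 5) ∨
      Nonempty (H ≃g trianglePendant1) ∨ Nonempty (H ≃g trianglePendant2) ∨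
      (H.IsTree ∧ _root_.indepNum H = 3) := by
  classical
  have hne : Nonempty V := hconn.nonempty
  have hcard : Nat.card V = Fintype.card V := Nat.card_eq_fintype_card
  have hEn := conn_card_le H hconn
  have hα1 : 1 ≤ _root_.indepNum H := one_le_indepNum
  have hαn : _root_.indepNum H ≤ Fintype.card V := indepNum_le_card
  have hn1 : 1 ≤ Fintype.card V := Fintype.card_pos
  have heq : numEdges H + _root_.indepNum H = Fintype.card V + 2 := by
    unfold sVal at hs
    omega
  have hαle : _root_.indepNum H ≤ 3 := by omega
  rcases (show _root_.indepNum H = 1 ∨ _root_.indepNum H = 2 ∨ _root_.indepNum H = 3 by omega) with hα | hα | hα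
  · exfalso
    have hcomp : ∀ x y : V, x ≠ y → H.Adj x y := by
      intro x y hxy
      by_contra hn
      have := pair_le_indepNum hxy hn
      omega
    have h2E := complete_two_numEdges hcomp
    have hn4 : Fintype.card V ≤ 4 := by
      by_contra h
      push_neg at h
      have hmul : 5 * (Fintype.card V - 1) ≤ Fintype.card V * (Fintype.card V - 1) :=
        Nat.mul_le_mul_right _ (by omega)
      omega
    rcases (show Fintype.card V = 1 ∨ Fintype.card V = 2 ∨ Fintype.card V = 3 ∨
      Fintype.card V = 4 by omega) with h | h | h | h <;> rw [h] at h2E <;> omega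
  · -- _root_.indepNum 2 : numEdges = card
    have hE : numEdges H = Fintype.card V := by omega
    have hn2 : 2 ≤ Fintype.card V := by omega
    by_cases hleaf : ∃ x, H.degree x = 1
    · obtain ⟨x, hx⟩ := hleaf
      rw [degree_eq_ncard] at hx
      obtain ⟨u, hNx⟩ := Set.ncard_eq_one.1 hx
      rcases leaf_s2 hconn hα hE x u hNx with h | h
      · exact Or.inr (Or.inr (Or.inl h))
      · exact Or.inr (Or.inr (Or.inr (Or.inl h)))
    · push_neg at hleaf
      have hdeg1 : ∀ x, 1 ≤ H.degree x := degree_pos hconn hn2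
      have hdeg2 : ∀ x, 2 ≤ H.degree x := by
        intro x
        have h1 := hdeg1 x
        have h2 := hleaf x
        omega
      have hsum := handshake (H := H)
      have hall : ∀ x, H.degree x = 2 := by
        intro x
        by_contra hx
        have hx3 : 3 ≤ H.degree x := by
          have := hdeg2 x
          omega
        have hsplit : ∑ y ∈ Finset.univ.erase x, H.degree y + H.degree x = ∑ y, H.degree y :=
          Finset.sum_erase_add _ _ (Finset.mem_univ x)
        have hge : (Finset.univ.erase x).card * 2 ≤ ∑ y ∈ Finset.univ.erase x, H.degree y := by
          have h' := Finset.card_nsmul_le_sum (Finset.univ.erase x) (fun y => H.degree y) 2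
            (fun i _ => by
              show 2 ≤ H.degree i
              exact hdeg2 i)
          rw [smul_eq_mul] at h'
          exact h'
        have hec : (Finset.univ.erase x).card = Fintype.card V - 1 := by
          rw [Finset.card_erase_of_mem (Finset.mem_univ x), Finset.card_univ]
        omega
      rcases two_regular_s2 hconn hα hE hall with h | h
      · exact Or.inl h
      · exact Or.inr (Or.inl h)
  · -- _root_.indepNum 3 : tree
    exact Or.inr (Or.inr (Or.inr (Or.inr
      ⟨isTree_of_conn_card H hconn (by omega), hα⟩)))
end Forward

/-- For a finite connected graph `H` with
`s(H) = |E(H)| - |V(H)| + α(H)`: `s(H) = 0` iff `H` is a single vertex or a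
single edge; `s(H) = 1` iff `H` is a triangle or a path on `3` or `4` vertices;
`s(H) = 2` iff `H` is a cycle of length four or five, or a triangle with a
pendant path on one or two further vertices, or a tree with `α(H) = 3`. -/
theorem statement_18 {V : Type} [Fintype V] (H : SimpleGraph V)
    (hconn : H.Connected) :
    (sVal H = 0 ↔
      Nonempty (H ≃g completeGraph (Fin 1)) ∨
      Nonempty (H ≃g completeGraph (Fin 2))) ∧
    (sVal H = 1 ↔
      Nonempty (H ≃g completeGraph (Fin 3)) ∨
      Nonempty (H ≃g pathGraph 3) ∨ Nonempty (H ≃g pathGraph 4)) ∧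
    (sVal H = 2 ↔
      Nonempty (H ≃g cycleGraph 4) ∨ Nonempty (H ≃g cycleGraph 5) ∨
      Nonempty (H ≃g trianglePendant1) ∨ Nonempty (H ≃g trianglePendant2) ∨
      (H.IsTree ∧ _root_.indepNum H = 3)) := by
  constructor
  · constructor
    · exact forward0 hconn
    · rintro (h | h) <;> obtain ⟨e⟩ := h
      · rw [sVal_iso e]; exact sVal_K1
      · rw [sVal_iso e]; exact sVal_K2
  constructor
  · constructor
    · exact forward1 hconn
    · rintro (h | h | h) <;> obtain ⟨e⟩ := h
      · rw [sVal_iso e]; exact sVal_K3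
      · rw [sVal_iso e]; exact sVal_P3
      · rw [sVal_iso e]; exact sVal_P4
  · constructor
    · exact forward2 hconn
    · rintro (h | h | h | h | ⟨htree, hα⟩)
      · obtain ⟨e⟩ := h; rw [sVal_iso e]; exact sVal_C4
      · obtain ⟨e⟩ := h; rw [sVal_iso e]; exact sVal_C5
      · obtain ⟨e⟩ := h; rw [sVal_iso e]; exact sVal_TP1
      · obtain ⟨e⟩ := h; rw [sVal_iso e]; exact sVal_TP2
      · have hE := numEdges_tree H htree
        haveI : Nonempty V := htree.isConnected.nonempty
        have hn : 1 ≤ Fintype.card V := Fintype.card_pos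
        unfold sVal
        rw [hα, Nat.card_eq_fintype_card]
        push_cast
        omega
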